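/- There exists a uniformly discrete metric space X of uniformly bounded geometry such that the free group F₂ on two generators admits an injective group homomorphism into the wobbling group W(X), while there is no injective group homomorphism from W(ℤ) into W(X) (indeed, there is no bornologous injection from ℤ into X). -/

import Mathlib

/-- The wobbling group of a metric space: all permutations of bounded displacement. -/
def Wobbling (X : Type*) [MetricSpace X] : Subgroup (Equiv.Perm X) where
  carrier := {α : Equiv.Perm X | ∃ r : ℝ, ∀ x : X, dist x (α x) ≤ r}
  one_mem' := ⟨0, fun x => by simp⟩
  mul_mem' := by
    rintro a b ⟨r, hr⟩ ⟨s, hs⟩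
    exact ⟨s + r, fun x =>
      (dist_triangle x (b x) (a (b x))).trans (add_le_add (hs x) (hr (b x)))⟩
  inv_mem' := by
    rintro a ⟨r, hr⟩
    refine ⟨r, fun x => ?_⟩
    have := hr (a⁻¹ x)
    simpa [dist_comm] using this

/-- A map between metric spaces is bornologous if it maps pairs at uniformly bounded
distance to pairs at uniformly bounded distance. -/
def Bornologous {X Y : Type*} [MetricSpace X] [MetricSpace Y] (f : X → Y) : Prop :=
  ∀ r : ℝ, ∃ s : ℝ, ∀ x y : X, dist x y ≤ r → dist (f x) (f y) ≤ s

/-- The required properties of the example space: uniformly discrete, of uniformly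
bounded geometry, `F₂` embeds into `W(X)`, yet `W(ℤ)` does not embed into `W(X)` and
there is no bornologous injection of `ℤ` into `X`. -/
def Example2Spec (X : Type) [MetricSpace X] : Prop :=
  (∃ ε : ℝ, 0 < ε ∧ ∀ x y : X, x ≠ y → ε ≤ dist x y) ∧
  (∀ r : ℝ, ∃ m : ℕ, ∀ x : X, {y : X | dist x y ≤ r}.ncard ≤ m) ∧
  (∃ φ : FreeGroup (Fin 2) →* ↥(Wobbling X), Function.Injective φ) ∧
  (¬ ∃ φ : ↥(Wobbling ℤ) →* ↥(Wobbling X), Function.Injective φ) ∧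
  (¬ ∃ f : ℤ → X, Function.Injective f ∧ Bornologous f)


open Equiv List

namespace RF

variable (L : List (Fin 2 × Bool))

lemma getElem_idx_congr {n m : ℕ} (h : n = m) (hn : n < L.length) :
    L[n]'hn = L[m]'(h ▸ hn) := by subst h; rfl

/-- adjacent transposition `(q, q+1)` as a permutation of `Fin (L.length + 1)`. -/
def sw (q : ℕ) : Equiv.Perm (Fin (L.length + 1)) :=
  if h : q < L.length then Equiv.swap ⟨q, by omega⟩ ⟨q + 1, by omega⟩ else 1

def UpAt (i : Fin 2) (q : ℕ) : Prop :=
  ∃ h : q < L.length, L[L.length - 1 - q]'(by omega) = (i, true)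

def DownAt (i : Fin 2) (q : ℕ) : Prop :=
  ∃ h : q < L.length, L[L.length - 1 - q]'(by omega) = (i, false)

def upP (i : Fin 2) (q : ℕ) : Bool := L[L.length - 1 - q]? = some (i, true)

def downP (i : Fin 2) (q : ℕ) : Bool := L[L.length - 1 - q]? = some (i, false)

def upL (i : Fin 2) : List ℕ := (List.range L.length).filter (upP L i)

def downL (i : Fin 2) : List ℕ := ((List.range L.length).filter (downP L i)).reverse

def Pup (i : Fin 2) : Equiv.Perm (Fin (L.length + 1)) := ((upL L i).map (sw L)).prod

def Pdown (i : Fin 2) : Equiv.Perm (Fin (L.length + 1)) := ((downL L i).map (sw L)).prod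

def pigen (i : Fin 2) : Equiv.Perm (Fin (L.length + 1)) := Pup L i * Pdown L i

lemma mem_upL_iff {i : Fin 2} {q : ℕ} : q ∈ upL L i ↔ UpAt L i q := by
  simp only [upL, List.mem_filter, List.mem_range, upP, decide_eq_true_eq, UpAt]
  constructor
  · rintro ⟨h1, h2⟩
    refine ⟨h1, ?_⟩
    rwa [List.getElem?_eq_getElem (show L.length - 1 - q < L.length by omega),
      Option.some_inj] at h2
  · rintro ⟨h1, h2⟩
    refine ⟨h1, ?_⟩
    rwa [List.getElem?_eq_getElem (show L.length - 1 - q < L.length by omega),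
      Option.some_inj]

lemma mem_downL_iff {i : Fin 2} {q : ℕ} : q ∈ downL L i ↔ DownAt L i q := by
  simp only [downL, List.mem_reverse, List.mem_filter, List.mem_range, downP,
    decide_eq_true_eq, DownAt]
  constructor
  · rintro ⟨h1, h2⟩
    refine ⟨h1, ?_⟩
    rwa [List.getElem?_eq_getElem (show L.length - 1 - q < L.length by omega),
      Option.some_inj] at h2
  · rintro ⟨h1, h2⟩
    refine ⟨h1, ?_⟩
    rwa [List.getElem?_eq_getElem (show L.length - 1 - q < L.length by omega),
      Option.some_inj]

lemma prod_fix (lst : List ℕ) (v : Fin (L.length + 1))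
    (h : ∀ a ∈ lst, a ≠ v.val ∧ a + 1 ≠ v.val) :
    ((lst.map (sw L)).prod) v = v := by
  induction lst with
  | nil => simp
  | cons a t ih =>
    simp only [List.map_cons, List.prod_cons, Equiv.Perm.mul_apply]
    rw [ih (fun b hb => h b (List.mem_cons_of_mem _ hb))]
    have ha := h a (List.mem_cons_self)
    unfold sw
    split
    · apply Equiv.swap_apply_of_ne_of_ne
      · intro hv
        apply ha.1
        rw [hv]
      · intro hv
        apply ha.2
        have := congrArg Fin.val hv
        simpa using this.symm
    · rfl

lemma prod_asc (lst : List ℕ) (hs : lst.Pairwise (· < ·)) (hlt : ∀ a ∈ lst, a < L.length)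
    {q : ℕ} (hq : q ∈ lst) (h1 : q < L.length + 1) (h2 : q + 1 < L.length + 1) :
    ((lst.map (sw L)).prod) ⟨q, h1⟩ = ⟨q + 1, h2⟩ := by
  induction lst with
  | nil => cases hq
  | cons a t ih =>
    simp only [List.map_cons, List.prod_cons, Equiv.Perm.mul_apply]
    have hpc := List.pairwise_cons.mp hs
    rcases List.mem_cons.mp hq with rfl | hq'
    · rw [prod_fix L t ⟨q, h1⟩ (fun b hb => by
        have : q < b := hpc.1 b hb
        constructor <;> simp <;> omega)]
      unfold sw
      rw [dif_pos (hlt q (List.mem_cons_self))]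
      exact Equiv.swap_apply_left _ _
    · have ha : a < q := hpc.1 q hq'
      rw [ih hpc.2 (fun b hb => hlt b (List.mem_cons_of_mem _ hb)) hq']
      unfold sw
      split
      · apply Equiv.swap_apply_of_ne_of_ne
        · intro hv
          have := congrArg Fin.val hv
          simp at this; omega
        · intro hv
          have := congrArg Fin.val hv
          simp at this; omega
      · rfl

lemma prod_desc (lst : List ℕ) (hs : lst.Pairwise (· > ·)) (hlt : ∀ a ∈ lst, a < L.length)
    {q : ℕ} (hq : q ∈ lst) (h1 : q + 1 < L.length + 1) (h2 : q < L.length + 1) :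
    ((lst.map (sw L)).prod) ⟨q + 1, h1⟩ = ⟨q, h2⟩ := by
  induction lst with
  | nil => cases hq
  | cons a t ih =>
    simp only [List.map_cons, List.prod_cons, Equiv.Perm.mul_apply]
    have hpc := List.pairwise_cons.mp hs
    rcases List.mem_cons.mp hq with rfl | hq'
    · rw [prod_fix L t ⟨q + 1, h1⟩ (fun b hb => by
        have : b < q := hpc.1 b hb
        constructor <;> simp <;> omega)]
      unfold sw
      rw [dif_pos (hlt q (List.mem_cons_self))]
      exact Equiv.swap_apply_right _ _
    · have ha : q < a := hpc.1 q hq'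
      rw [ih hpc.2 (fun b hb => hlt b (List.mem_cons_of_mem _ hb)) hq']
      unfold sw
      split
      · apply Equiv.swap_apply_of_ne_of_ne
        · intro hv
          have := congrArg Fin.val hv
          simp at this; omega
        · intro hv
          have := congrArg Fin.val hv
          simp at this; omega
      · rfl

/-- no adjacent cancelling pair in a reduced word. -/
lemma no_cancel (hL : FreeGroup.reduce L = L) {p : ℕ} (hp : p + 1 < L.length)
    {i : Fin 2} {b : Bool} (h1 : L[p]'(by omega) = (i, b)) (h2 : L[p + 1]'hp = (i, !b)) :
    False := by
  have hsplit : L = L.take p ++ (i, b) :: (i, !b) :: L.drop (p + 2) := by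
    conv_lhs => rw [← List.take_append_drop p L]
    rw [List.drop_eq_getElem_cons (show p < L.length by omega),
      List.drop_eq_getElem_cons hp, h1, h2]
  exact FreeGroup.reduce.not (hL.trans hsplit)

lemma not_up_down (hL : FreeGroup.reduce L = L) {i : Fin 2} {q q' : ℕ}
    (hu : UpAt L i q) (hd : DownAt L i q')
    (hadj : q' = q ∨ q' = q + 1 ∨ q = q' + 1) : False := by
  obtain ⟨hq, hu⟩ := hu
  obtain ⟨hq', hd⟩ := hd
  rcases hadj with rfl | rfl | h
  · have : ((i, true) : Fin 2 × Bool) = (i, false) := by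
      rw [← hu]; exact hd
    simp at this
  · -- down at q+1, up at q : pair at positions (ℓ-2-q, ℓ-1-q) = ((i,false),(i,true))
    have hd' : L[L.length - 2 - q]'(by omega) = (i, false) :=
      (getElem_idx_congr L (show L.length - 2 - q = L.length - 1 - (q + 1) by omega)
        (by omega)).trans hd
    refine no_cancel L hL (p := L.length - 2 - q) (by omega) (b := false) hd' ?_
    exact (getElem_idx_congr L (show L.length - 2 - q + 1 = L.length - 1 - q by omega)
      (by omega)).trans hu
  · -- up at q = q'+1, down at q' : pair at positions (ℓ-1-q, ℓ-1-q') = ((i,true),(i,false))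
    subst h
    refine no_cancel L hL (p := L.length - 1 - (q' + 1)) (by omega) (b := true) hu ?_
    exact (getElem_idx_congr L
      (show L.length - 1 - (q' + 1) + 1 = L.length - 1 - q' by omega) (by omega)).trans hd

lemma upL_sorted (i : Fin 2) : (upL L i).Pairwise (· < ·) :=
  List.Pairwise.sublist (List.filter_sublist) (List.pairwise_lt_range)

lemma downL_sorted (i : Fin 2) : (downL L i).Pairwise (· > ·) := by
  rw [downL, List.pairwise_reverse]
  exact List.Pairwise.sublist (List.filter_sublist) (List.pairwise_lt_range)

lemma upL_lt (i : Fin 2) : ∀ a ∈ upL L i, a < L.length := by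
  intro a ha
  exact ((mem_upL_iff L).mp ha).1

lemma downL_lt (i : Fin 2) : ∀ a ∈ downL L i, a < L.length := by
  intro a ha
  exact ((mem_downL_iff L).mp ha).1

lemma eval_up (hL : FreeGroup.reduce L = L) {i : Fin 2} {q : ℕ} (h : UpAt L i q)
    (h1 : q < L.length + 1) (h2 : q + 1 < L.length + 1) :
    pigen L i ⟨q, h1⟩ = ⟨q + 1, h2⟩ := by
  have hfix : Pdown L i ⟨q, h1⟩ = ⟨q, h1⟩ := by
    apply prod_fix
    intro a ha
    have hda := (mem_downL_iff L).mp ha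
    constructor
    · intro hcon
      exact not_up_down L hL h hda (Or.inl hcon)
    · intro hcon
      exact not_up_down L hL h hda (Or.inr (Or.inr hcon.symm))
  rw [pigen, Equiv.Perm.mul_apply, hfix]
  exact prod_asc L _ (upL_sorted L i) (upL_lt L i) ((mem_upL_iff L).mpr h) h1 h2

lemma eval_down (hL : FreeGroup.reduce L = L) {i : Fin 2} {q : ℕ} (h : DownAt L i q)
    (h1 : q + 1 < L.length + 1) (h2 : q < L.length + 1) :
    pigen L i ⟨q + 1, h1⟩ = ⟨q, h2⟩ := by
  have hdn : Pdown L i ⟨q + 1, h1⟩ = ⟨q, h2⟩ :=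
    prod_desc L _ (downL_sorted L i) (downL_lt L i) ((mem_downL_iff L).mpr h) h1 h2
  rw [pigen, Equiv.Perm.mul_apply, hdn]
  apply prod_fix
  intro a ha
  have hua := (mem_upL_iff L).mp ha
  constructor
  · intro hcon
    exact not_up_down L hL hua h (Or.inl hcon.symm)
  · intro hcon
    exact not_up_down L hL hua h (Or.inr (Or.inl hcon.symm))

end RF

/-- Residual finiteness of `F₂`, in permutation form. -/
theorem freeGroup_rf (w : FreeGroup (Fin 2)) (hw : w ≠ 1) :
    ∃ (m : ℕ) (ρ : FreeGroup (Fin 2) →* Equiv.Perm (Fin m)), 1 ≤ m ∧ ρ w ≠ 1 := by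
  classical
  set L := w.toWord with hLdef
  have hL : FreeGroup.reduce L = L := FreeGroup.reduce_toWord w
  have hlen : 0 < L.length := by
    rcases Nat.eq_zero_or_pos L.length with h0 | h
    · exfalso
      apply hw
      apply FreeGroup.toWord_injective
      rw [← hLdef]  -- ?
      rw [List.length_eq_zero_iff] at h0
      rw [h0, FreeGroup.toWord_one]
    · exact h
  refine ⟨L.length + 1, FreeGroup.lift (fun i => RF.pigen L i), by omega, ?_⟩
  have hkey : ∀ j, ∀ _ : j ≤ L.length,
      (((L.drop (L.length - j)).map
        (fun x => bif x.2 then RF.pigen L x.1 else (RF.pigen L x.1)⁻¹)).prod)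
        ⟨0, by omega⟩ = ⟨j, by omega⟩ := by
    intro j
    induction j with
    | zero =>
      intro _
      simp
    | succ j ih =>
      intro hj
      have hp : L.length - (j + 1) < L.length := by omega
      rw [List.drop_eq_getElem_cons hp]
      simp only [List.map_cons, List.prod_cons, Equiv.Perm.mul_apply]
      have e1 : L.length - (j + 1) + 1 = L.length - j := by omega
      rw [e1, ih (by omega)]
      rcases hub : L[L.length - (j + 1)]'hp with ⟨i, b⟩
      have hidx : L.length - 1 - j = L.length - (j + 1) := by omega
      cases b with
      | true =>
        simp only [cond_true]
        apply RF.eval_up L hL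
        exact ⟨by omega, (RF.getElem_idx_congr L hidx (by omega)).trans hub⟩
      | false =>
        simp only [cond_false]
        have hdown : RF.DownAt L i j :=
          ⟨by omega, (RF.getElem_idx_congr L hidx (by omega)).trans hub⟩
        have hthis := RF.eval_down L hL hdown (by omega) (by omega)
        rw [Equiv.Perm.inv_def, Equiv.symm_apply_eq]
        exact hthis.symm
  intro hcon
  have heval : (FreeGroup.lift (fun i => RF.pigen L i)) w ⟨0, by omega⟩ = ⟨L.length, by omega⟩ := by
    rw [show (FreeGroup.lift fun i => RF.pigen L i) w = FreeGroup.lift (fun i => RF.pigen L i) (FreeGroup.mk L) by rw [hLdef, FreeGroup.mk_toWord]]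
    rw [FreeGroup.lift_mk]
    have := hkey L.length le_rfl
    simpa using this
  rw [hcon] at heval
  have := congrArg Fin.val heval
  simp at this
  omega


open Equiv

namespace SP

variable (m : ℕ → ℕ)

abbrev XS := (n : ℕ) × Fin (m n)

def succX (x : XS m) : XS m :=
  if h : x.2.val + 1 < m x.1 then ⟨x.1, ⟨x.2.val + 1, h⟩⟩ else x

def predX (x : XS m) : XS m :=
  if h : x.2.val = 0 then x else ⟨x.1, ⟨x.2.val - 1, by have := x.2.isLt; omega⟩⟩

def cst (n : ℕ) : ℕ := n + 2 * m n + 1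

variable {m}

lemma succX_fst (x : XS m) : (succX m x).1 = x.1 := by
  unfold succX; split <;> rfl

lemma predX_fst (x : XS m) : (predX m x).1 = x.1 := by
  unfold predX; split <;> rfl

variable (m) (A B : ∀ n, Equiv.Perm (Fin (m n)))

def alphaX : Equiv.Perm (XS m) := Equiv.Perm.sigmaCongrRightHom _ A

lemma alphaX_fst (x : XS m) : (alphaX m A x).1 = x.1 := by
  rcases x with ⟨n, u⟩; rfl

lemma alphaX_snd (n : ℕ) (u : Fin (m n)) : alphaX m A ⟨n, u⟩ = ⟨n, A n u⟩ := rfl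

/-- The graph on `XS m`: block-internal path edges plus edges from `A` and `B`. -/
def GX : SimpleGraph (XS m) where
  Adj x y := x ≠ y ∧ (y = succX m x ∨ x = succX m y ∨ y = alphaX m A x ∨ x = alphaX m A y ∨
    y = alphaX m B x ∨ x = alphaX m B y)
  symm := by
    constructor
    rintro x y ⟨h1, h2⟩
    exact ⟨h1.symm, by tauto⟩
  loopless := ⟨fun x h => h.1 rfl⟩

variable {m} {A B}

lemma adj_fst {x y : XS m} (h : (GX m A B).Adj x y) : x.1 = y.1 := by
  rcases h with ⟨-, h | h | h | h | h | h⟩ <;>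
    simp only [h, succX_fst, alphaX_fst]

lemma adj_pred (n : ℕ) (u : Fin (m n)) (k : ℕ) (hkm : k < m n) (hval : u.val = k + 1) :
    (GX m A B).Adj ⟨n, u⟩ ⟨n, ⟨k, hkm⟩⟩ := by
  constructor
  · intro hcon
    rcases Sigma.mk.inj_iff.mp hcon with ⟨-, h2⟩
    have : u = ⟨k, hkm⟩ := eq_of_heq h2
    rw [this] at hval
    simp at hval
  · refine Or.inr (Or.inl ?_)
    unfold succX
    have hlt : (⟨n, ⟨k, hkm⟩⟩ : XS m).2.val + 1 < m (⟨n, ⟨k, hkm⟩⟩ : XS m).1 := by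
      dsimp only
      have := u.isLt
      omega
    rw [dif_pos hlt]
    dsimp only
    congr 1
    exact Fin.ext (by simpa using hval)

lemma reach_aux (hm : ∀ n, 1 ≤ m n) :
    ∀ (k : ℕ) (x : XS m), x.2.val ≤ k →
      (GX m A B).Reachable x ⟨x.1, ⟨0, hm x.1⟩⟩ := by
  intro k
  induction k with
  | zero =>
    intro x hx
    obtain ⟨n, u⟩ := x
    dsimp only at hx ⊢
    have : u = ⟨0, hm n⟩ := Fin.ext (by simp; omega)
    rw [this]
  | succ k ih =>
    intro x hx
    by_cases hk : x.2.val ≤ k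
    · exact ih x hk
    · obtain ⟨n, u⟩ := x
      dsimp only at hx hk ⊢
      have hval : u.val = k + 1 := by omega
      have hkm : k < m n := by have := u.isLt; omega
      have hadj : (GX m A B).Adj ⟨n, u⟩ ⟨n, ⟨k, hkm⟩⟩ := adj_pred n u k hkm hval
      exact (hadj.reachable).trans (ih ⟨n, ⟨k, hkm⟩⟩ le_rfl)

lemma reach_zero (hm : ∀ n, 1 ≤ m n) (x : XS m) :
    (GX m A B).Reachable x ⟨x.1, ⟨0, hm x.1⟩⟩ :=
  reach_aux hm x.2.val x le_rfl

lemma reach_same (hm : ∀ n, 1 ≤ m n) {x y : XS m} (h : x.1 = y.1) :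
    (GX m A B).Reachable x y := by
  obtain ⟨n, u⟩ := x
  obtain ⟨p, v⟩ := y
  dsimp only at h
  cases h
  exact (reach_zero hm ⟨n, u⟩).trans (reach_zero hm ⟨n, v⟩).symm

lemma dist_zero_aux (hm : ∀ n, 1 ≤ m n) :
    ∀ (k : ℕ) (x : XS m), x.2.val ≤ k →
      (GX m A B).dist x ⟨x.1, ⟨0, hm x.1⟩⟩ ≤ k := by
  intro k
  induction k with
  | zero =>
    intro x hx
    obtain ⟨n, u⟩ := x
    dsimp only at hx ⊢
    have : u = ⟨0, hm n⟩ := Fin.ext (by simp; omega)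
    rw [this, SimpleGraph.dist_self]
  | succ k ih =>
    intro x hx
    by_cases hk : x.2.val ≤ k
    · exact (ih x hk).trans (by omega)
    · obtain ⟨n, u⟩ := x
      dsimp only at hx hk ⊢
      have hval : u.val = k + 1 := by omega
      have hkm : k < m n := by have := u.isLt; omega
      have hadj : (GX m A B).Adj ⟨n, u⟩ ⟨n, ⟨k, hkm⟩⟩ := adj_pred n u k hkm hval
      have hreach : (GX m A B).Reachable (⟨n, ⟨k, hkm⟩⟩ : XS m)
          ⟨n, ⟨0, hm n⟩⟩ := reach_zero hm ⟨n, ⟨k, hkm⟩⟩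
      obtain ⟨w, hw⟩ := hreach.exists_walk_length_eq_dist
      have hdy : w.length ≤ k := by
        rw [hw]
        exact ih ⟨n, ⟨k, hkm⟩⟩ le_rfl
      have := SimpleGraph.dist_le (SimpleGraph.Walk.cons hadj w)
      simp only [SimpleGraph.Walk.length_cons] at this
      exact this.trans (by omega)

lemma dist_same_le (hm : ∀ n, 1 ≤ m n) {x y : XS m} (h : x.1 = y.1) :
    (GX m A B).dist x y ≤ 2 * m x.1 := by
  obtain ⟨n, u⟩ := x
  obtain ⟨p, v⟩ := y
  dsimp only at h ⊢
  cases h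
  obtain ⟨w1, hw1⟩ :=
    (reach_zero (A := A) (B := B) hm ⟨n, u⟩).exists_walk_length_eq_dist
  obtain ⟨w2, hw2⟩ :=
    (reach_zero (A := A) (B := B) hm ⟨n, v⟩).exists_walk_length_eq_dist
  have h1 : w1.length ≤ m n := by
    rw [hw1]
    refine (dist_zero_aux hm u.val ⟨n, u⟩ le_rfl).trans ?_
    have := u.isLt; omega
  have h2 : w2.length ≤ m n := by
    rw [hw2]
    refine (dist_zero_aux hm v.val ⟨n, v⟩ le_rfl).trans ?_
    have := v.isLt; omega
  have := SimpleGraph.dist_le (w1.append w2.reverse)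
  simp only [SimpleGraph.Walk.length_append, SimpleGraph.Walk.length_reverse] at this
  exact this.trans (by omega)

variable (m) (A B)

/-- The ℕ-valued distance. -/
noncomputable def dd : XS m → XS m → ℕ := fun x y =>
  if x.1 = y.1 then (GX m A B).dist x y else cst m x.1 + cst m y.1

variable {m} {A B}

lemma dd_self (x : XS m) : dd m A B x x = 0 := by
  simp [dd, SimpleGraph.dist_self]

lemma dd_comm (x y : XS m) : dd m A B x y = dd m A B y x := by
  unfold dd
  by_cases h : x.1 = y.1
  · rw [if_pos h, if_pos h.symm, SimpleGraph.dist_comm]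
  · rw [if_neg h, if_neg (fun hc => h hc.symm), Nat.add_comm]

lemma dd_eq_zero (hm : ∀ n, 1 ≤ m n) {x y : XS m} (h : dd m A B x y = 0) : x = y := by
  unfold dd at h
  by_cases hb : x.1 = y.1
  · rw [if_pos hb] at h
    exact ((reach_same hm hb).dist_eq_zero_iff).mp h
  · rw [if_neg hb] at h
    unfold cst at h
    omega

lemma dd_triangle (hm : ∀ n, 1 ≤ m n) (x y z : XS m) :
    dd m A B x z ≤ dd m A B x y + dd m A B y z := by
  unfold dd
  by_cases hxz : x.1 = z.1
  · rw [if_pos hxz]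
    by_cases hxy : x.1 = y.1
    · have hyz : y.1 = z.1 := hxy.symm.trans hxz
      rw [if_pos hxy, if_pos hyz]
      obtain ⟨w1, hw1⟩ := (reach_same (A := A) (B := B) hm hxy).exists_walk_length_eq_dist
      obtain ⟨w2, hw2⟩ := (reach_same (A := A) (B := B) hm hyz).exists_walk_length_eq_dist
      have := SimpleGraph.dist_le (w1.append w2)
      simpa [SimpleGraph.Walk.length_append, hw1, hw2] using this
    · have hyz : ¬ y.1 = z.1 := fun hc => hxy (hxz.trans hc.symm)
      rw [if_neg hxy, if_neg hyz]
      have hd : (GX m A B).dist x z ≤ 2 * m x.1 := dist_same_le hm hxz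
      unfold cst
      omega
  · rw [if_neg hxz]
    by_cases hxy : x.1 = y.1
    · have hyz : ¬ y.1 = z.1 := fun hc => hxz (hxy.trans hc)
      rw [if_pos hxy, if_neg hyz]
      have : cst m x.1 = cst m y.1 := by rw [hxy]
      omega
    · by_cases hyz : y.1 = z.1
      · rw [if_neg hxy, if_pos hyz]
        have : cst m y.1 = cst m z.1 := by rw [hyz]
        omega
      · rw [if_neg hxy, if_neg hyz]
        omega

variable (m) (A B)

/-- The metric space structure. -/
noncomputable def metricX (hm : ∀ n, 1 ≤ m n) : MetricSpace (XS m) where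
  dist x y := (dd m A B x y : ℝ)
  dist_self x := by
    show ((dd m A B x x : ℕ) : ℝ) = 0
    rw [dd_self]; simp
  dist_comm x y := by
    show ((dd m A B x y : ℕ) : ℝ) = ((dd m A B y x : ℕ) : ℝ)
    rw [dd_comm]
  dist_triangle x y z := by
    show ((dd m A B x z : ℕ) : ℝ) ≤ ((dd m A B x y : ℕ) : ℝ) + ((dd m A B y z : ℕ) : ℝ)
    have := dd_triangle (A := A) (B := B) hm x y z
    exact_mod_cast this
  eq_of_dist_eq_zero := by
    intro x y h
    have h' : ((dd m A B x y : ℕ) : ℝ) = 0 := h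
    have : dd m A B x y = 0 := by exact_mod_cast h'
    exact dd_eq_zero hm this

lemma metric_dist_eq (hm : ∀ n, 1 ≤ m n) (x y : XS m) :
    @dist _ (metricX m A B hm).toDist x y = (dd m A B x y : ℝ) := rfl

end SP

namespace SP

variable {m : ℕ → ℕ} {A B : ∀ n, Equiv.Perm (Fin (m n))}

noncomputable def nbhdX (A B : ∀ n, Equiv.Perm (Fin (m n))) (x : XS m) : Finset (XS m) :=
  [x, succX m x, predX m x, alphaX m A x, (alphaX m A)⁻¹ x, alphaX m B x,
    (alphaX m B)⁻¹ x].toFinset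

lemma card_nbhdX (x : XS m) : (nbhdX A B x).card ≤ 7 :=
  (List.toFinset_card_le _).trans (by simp)

lemma mem_nbhdX_self (x : XS m) : x ∈ nbhdX A B x := by
  simp [nbhdX]

lemma succ_or_pred {x y : XS m} (h : x = succX m y) : y = predX m x ∨ y = x := by
  unfold succX at h
  split at h
  · left
    rw [h]
    unfold predX
    rw [dif_neg (by simp)]
    obtain ⟨n, u⟩ := y
    simp
  · right; rw [h]

lemma adj_mem_nbhdX {x y : XS m} (h : (GX m A B).Adj x y) : y ∈ nbhdX A B x := by
  rcases h with ⟨hne, h | h | h | h | h | h⟩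
  · simp [nbhdX, h]
  · rcases succ_or_pred h with h' | h' <;> simp [nbhdX, h']
  · simp [nbhdX, h]
  · have : y = (alphaX m A)⁻¹ x := by
      rw [Equiv.Perm.inv_def, Equiv.eq_symm_apply]
      exact h.symm
    simp [nbhdX, this]
  · simp [nbhdX, h]
  · have : y = (alphaX m B)⁻¹ x := by
      rw [Equiv.Perm.inv_def, Equiv.eq_symm_apply]
      exact h.symm
    simp [nbhdX, this]

noncomputable def ballX (A B : ∀ n, Equiv.Perm (Fin (m n))) (x : XS m) : ℕ → Finset (XS m)
  | 0 => {x}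
  | (k + 1) => (ballX A B x k).biUnion (nbhdX A B)

lemma card_ballX (x : XS m) (k : ℕ) : (ballX A B x k).card ≤ 7 ^ k := by
  induction k with
  | zero => simp [ballX]
  | succ k ih =>
    have h1 : (ballX A B x (k + 1)).card ≤
        ∑ z ∈ ballX A B x k, (nbhdX A B z).card := Finset.card_biUnion_le
    have h2 : ∑ z ∈ ballX A B x k, (nbhdX A B z).card ≤
        (ballX A B x k).card * 7 := by
      calc ∑ z ∈ ballX A B x k, (nbhdX A B z).card
          ≤ ∑ _z ∈ ballX A B x k, 7 := Finset.sum_le_sum (fun z _ => card_nbhdX z)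
        _ = (ballX A B x k).card * 7 := by rw [Finset.sum_const, smul_eq_mul]
    calc (ballX A B x (k + 1)).card ≤ (ballX A B x k).card * 7 := h1.trans h2
      _ ≤ 7 ^ k * 7 := by exact Nat.mul_le_mul_right 7 ih
      _ = 7 ^ (k + 1) := by ring

lemma ballX_mono {x : XS m} {k : ℕ} {z : XS m} (hz : z ∈ ballX A B x k) :
    z ∈ ballX A B x (k + 1) :=
  Finset.mem_biUnion.mpr ⟨z, hz, mem_nbhdX_self z⟩

lemma mem_ballX_of_dist (hm : ∀ n, 1 ≤ m n) {x : XS m} :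
    ∀ (k : ℕ) (y : XS m), x.1 = y.1 → (GX m A B).dist x y ≤ k → y ∈ ballX A B x k := by
  intro k
  induction k with
  | zero =>
    intro y hb hd
    have h0 : (GX m A B).dist x y = 0 := by omega
    have : x = y := ((reach_same hm hb).dist_eq_zero_iff).mp h0
    simp [ballX, this]
  | succ k ih =>
    intro y hb hd
    by_cases hd' : (GX m A B).dist x y ≤ k
    · exact ballX_mono (ih y hb hd')
    · have hne : (GX m A B).dist y x ≠ 0 := by rw [SimpleGraph.dist_comm]; omega
      obtain ⟨p, hp⟩ := ((reach_same hm hb.symm)).exists_walk_length_eq_dist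
      cases p with
      | nil =>
        exfalso
        rw [SimpleGraph.dist_self] at hd'
        exact hd' (Nat.zero_le k)
      | @cons _ z _ hadj q =>
        have hq : q.length ≤ k := by
          have : (GX m A B).dist y x = (GX m A B).dist x y := SimpleGraph.dist_comm ..
          simp only [SimpleGraph.Walk.length_cons] at hp
          rw [this] at hp
          omega
        have hzx : x.1 = z.1 := hb.trans (adj_fst hadj)
        have hdz : (GX m A B).dist x z ≤ k := by
          have := SimpleGraph.dist_le q.reverse
          rw [SimpleGraph.Walk.length_reverse] at this
          exact this.trans hq
        exact Finset.mem_biUnion.mpr ⟨z, ih z hzx hdz, adj_mem_nbhdX hadj.symm⟩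

/-- low blocks finset -/
noncomputable def lowF (m : ℕ → ℕ) (K : ℕ) : Finset (XS m) :=
  (Finset.range K).sigma (fun _n => Finset.univ)

lemma mem_lowF {K : ℕ} {y : XS m} : y ∈ lowF m K ↔ y.1 < K := by
  obtain ⟨n, v⟩ := y
  simp [lowF]

lemma card_lowF (K : ℕ) : (lowF m K).card = ∑ n ∈ Finset.range K, m n := by
  rw [lowF, Finset.card_sigma]
  simp

lemma ball_subset (hm : ∀ n, 1 ≤ m n) (x : XS m) (r : ℝ) :
    {y : XS m | (dd m A B x y : ℝ) ≤ r} ⊆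
      ↑(ballX A B x ⌊r⌋₊ ∪ lowF m ⌊r⌋₊) := by
  intro y hy
  simp only [Set.mem_setOf_eq] at hy
  simp only [Finset.coe_union, Set.mem_union, Finset.mem_coe]
  by_cases hb : x.1 = y.1
  · left
    have h0 : (0 : ℝ) ≤ r := le_trans (by positivity) hy
    have : dd m A B x y ≤ ⌊r⌋₊ := Nat.le_floor hy
    unfold dd at this
    rw [if_pos hb] at this
    exact mem_ballX_of_dist hm _ y hb this
  · right
    rw [mem_lowF]
    have : dd m A B x y = cst m x.1 + cst m y.1 := by unfold dd; rw [if_neg hb]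
    rw [this] at hy
    have hy1 : ((y.1 + 1 : ℕ) : ℝ) ≤ r := by
      refine le_trans ?_ hy
      have : y.1 + 1 ≤ cst m x.1 + cst m y.1 := by unfold cst; omega
      exact_mod_cast this
    have := Nat.le_floor hy1
    omega

lemma bounded_geometry (hm : ∀ n, 1 ≤ m n) (r : ℝ) (x : XS m) :
    {y : XS m | (dd m A B x y : ℝ) ≤ r}.ncard ≤
      7 ^ ⌊r⌋₊ + ∑ n ∈ Finset.range ⌊r⌋₊, m n := by
  have hsub := ball_subset (A := A) (B := B) hm x r
  have hfin : (↑(ballX A B x ⌊r⌋₊ ∪ lowF m ⌊r⌋₊) : Set (XS m)).Finite :=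
    Finset.finite_toSet _
  calc {y : XS m | (dd m A B x y : ℝ) ≤ r}.ncard
      ≤ (↑(ballX A B x ⌊r⌋₊ ∪ lowF m ⌊r⌋₊) : Set (XS m)).ncard :=
        Set.ncard_le_ncard hsub hfin
    _ = (ballX A B x ⌊r⌋₊ ∪ lowF m ⌊r⌋₊).card := Set.ncard_coe_finset _
    _ ≤ (ballX A B x ⌊r⌋₊).card + (lowF m ⌊r⌋₊).card := Finset.card_union_le _ _
    _ ≤ 7 ^ ⌊r⌋₊ + ∑ n ∈ Finset.range ⌊r⌋₊, m n := by
        have := card_ballX (A := A) (B := B) x ⌊r⌋₊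
        rw [card_lowF]
        omega

lemma one_le_dd (hm : ∀ n, 1 ≤ m n) {x y : XS m} (hxy : x ≠ y) :
    1 ≤ dd m A B x y := by
  unfold dd
  by_cases hb : x.1 = y.1
  · rw [if_pos hb]
    have : (GX m A B).dist x y ≠ 0 := by
      intro h0
      exact hxy (((reach_same hm hb).dist_eq_zero_iff).mp h0)
    omega
  · rw [if_neg hb]
    unfold cst
    omega

lemma dd_alpha (x : XS m) : dd m A B x (alphaX m A x) ≤ 1 := by
  by_cases hfix : alphaX m A x = x
  · rw [hfix, dd_self]
    omega
  · have hb : x.1 = (alphaX m A x).1 := (alphaX_fst m A x).symm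
    have hadj : (GX m A B).Adj x (alphaX m A x) :=
      ⟨fun hc => hfix hc.symm, Or.inr (Or.inr (Or.inl rfl))⟩
    have := SimpleGraph.dist_le hadj.toWalk
    unfold dd
    rw [if_pos hb]
    simpa using this

lemma dd_beta (x : XS m) : dd m A B x (alphaX m B x) ≤ 1 := by
  by_cases hfix : alphaX m B x = x
  · rw [hfix, dd_self]
    omega
  · have hb : x.1 = (alphaX m B x).1 := (alphaX_fst m B x).symm
    have hadj : (GX m A B).Adj x (alphaX m B x) :=
      ⟨fun hc => hfix hc.symm, Or.inr (Or.inr (Or.inr (Or.inr (Or.inl rfl))))⟩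
    have := SimpleGraph.dist_le hadj.toWalk
    unfold dd
    rw [if_pos hb]
    simpa using this

end SP


section NoBorn

open SP

lemma noBorn (m : ℕ → ℕ) (A B : ∀ n, Equiv.Perm (Fin (m n))) (hm : ∀ n, 1 ≤ m n) :
    ¬ ∃ f : ℤ → XS m, Function.Injective f ∧
      @Bornologous ℤ (XS m) _ (metricX m A B hm) f := by
  letI := metricX m A B hm
  rintro ⟨f, hinj, hborn⟩
  obtain ⟨s, hs⟩ := hborn 1
  have hcons : ∀ n : ℤ, dist (f n) (f (n + 1)) ≤ s := by
    intro n
    apply hs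
    rw [Int.dist_eq]
    push_cast
    rw [show (n : ℝ) - (n + 1) = -1 by ring]
    norm_num
  have hs0 : 0 ≤ s := le_trans dist_nonneg (hcons 0)
  set K : ℕ := ⌊s⌋₊ + 1 with hK
  have hsK : s < K := by
    rw [hK]; push_cast; exact Nat.lt_floor_add_one s
  have hblock : ∀ n : ℤ, K ≤ (f n).1 → (f (n + 1)).1 = (f n).1 := by
    intro n hn
    by_contra hne
    have hdd : dist (f n) (f (n + 1)) = ((dd m A B (f n) (f (n + 1)) : ℕ) : ℝ) := rfl
    have heq : dd m A B (f n) (f (n + 1)) = cst m (f n).1 + cst m (f (n + 1)).1 := by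
      unfold dd; rw [if_neg (fun hc => hne hc.symm)]
    have hge : (K : ℝ) + 1 ≤ dist (f n) (f (n + 1)) := by
      rw [hdd, heq]
      have : K + 1 ≤ cst m (f n).1 + cst m (f (n + 1)).1 := by unfold cst; omega
      exact_mod_cast this
    have := hcons n
    linarith
  have hfin : {n : ℤ | (f n).1 < K}.Finite := by
    have hsub : {n : ℤ | (f n).1 < K} ⊆ f ⁻¹' ↑(lowF m K) := by
      intro n hn
      simp only [Set.mem_preimage, Finset.mem_coe, mem_lowF]
      exact hn
    exact (((lowF m K).finite_toSet).preimage hinj.injOn).subset hsub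
  obtain ⟨N0, hN0⟩ := hfin.bddAbove
  set N : ℤ := N0 + 1 with hNdef
  have hhigh : ∀ n : ℤ, N ≤ n → K ≤ (f n).1 := by
    intro n hn
    by_contra h
    have h1 : n ∈ {n : ℤ | (f n).1 < K} := by simp only [Set.mem_setOf_eq]; omega
    have := hN0 h1
    omega
  have hconst : ∀ n : ℤ, N ≤ n → (f n).1 = (f N).1 :=
    Int.le_induction rfl (fun n hn ih => by rw [hblock n (hhigh n hn), ih])
  have himg : f '' (Set.Ici N) ⊆ ↑(lowF m ((f N).1 + 1)) := by
    rintro _ ⟨n, hn, rfl⟩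
    simp only [Finset.mem_coe, mem_lowF]
    rw [hconst n hn]
    omega
  have hinf : (f '' (Set.Ici N)).Infinite :=
    Set.Infinite.image hinj.injOn (Set.Ici_infinite N)
  exact hinf (((lowF m ((f N).1 + 1)).finite_toSet).subset himg)

end NoBorn

namespace NW

open SP Equiv

def sZ : Equiv.Perm ℤ := Equiv.addRight 1

def tZ : Equiv.Perm ℤ := Equiv.swap 0 1

def t1Z : Equiv.Perm ℤ := Equiv.swap 1 2

lemma sZ_apply (x : ℤ) : sZ x = x + 1 := rfl

lemma sZ_pow_apply (M : ℕ) : ∀ x : ℤ, (sZ ^ M) x = x + M := by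
  induction M with
  | zero => simp
  | succ M ih =>
    intro x
    rw [pow_succ, Equiv.Perm.mul_apply, sZ_apply, ih (x + 1)]
    push_cast
    ring

lemma sZ_mem : sZ ∈ Wobbling ℤ := by
  refine ⟨1, fun x => ?_⟩
  rw [sZ_apply, Int.dist_eq]
  push_cast
  rw [show (x : ℝ) - (x + 1) = -1 by ring]
  norm_num

lemma tZ_mem : tZ ∈ Wobbling ℤ := by
  refine ⟨1, fun x => ?_⟩
  unfold tZ
  by_cases h0 : x = 0
  · subst h0
    rw [Equiv.swap_apply_left, Int.dist_eq]
    norm_num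
  · by_cases h1 : x = 1
    · subst h1
      rw [Equiv.swap_apply_right, Int.dist_eq]
      norm_num
    · rw [Equiv.swap_apply_of_ne_of_ne h0 h1, dist_self]
      norm_num

lemma conj_t1 : sZ * tZ * sZ⁻¹ = t1Z := by
  have h := Equiv.swap_apply_apply sZ 0 1
  rw [show sZ 0 = 1 by rw [sZ_apply]; ring, show sZ 1 = 2 by rw [sZ_apply]; ring] at h
  exact h.symm

lemma conj_swap_M (M : ℕ) : sZ ^ M * tZ * (sZ ^ M)⁻¹ = Equiv.swap ((0 : ℤ) + M) (1 + M) := by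
  have h := Equiv.swap_apply_apply (sZ ^ M) 0 1
  rw [sZ_pow_apply, sZ_pow_apply] at h
  exact h.symm

lemma swap_commute {a b c d : ℤ} (h1 : a ≠ c) (h2 : a ≠ d) (h3 : b ≠ c) (h4 : b ≠ d) :
    Commute (Equiv.swap a b) (Equiv.swap c d) := by
  apply Equiv.Perm.Disjoint.commute
  intro x
  by_cases hx : x = a ∨ x = b
  · right
    rcases hx with rfl | rfl
    · exact Equiv.swap_apply_of_ne_of_ne h1 h2
    · exact Equiv.swap_apply_of_ne_of_ne h3 h4
  · left
    push_neg at hx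
    exact Equiv.swap_apply_of_ne_of_ne hx.1 hx.2

lemma key_id (t t1 w : Equiv.Perm ℤ) (h1 : Commute w t) (h2 : Commute w t1)
    (hw : w * w = 1) :
    t * w * t1 * t * w * t1 = t * t1 * t * t1 := by
  calc t * w * t1 * t * w * t1 = t * (w * t1 * t * w) * t1 := by group
    _ = t * (t1 * w * t * w) * t1 := by rw [h2.eq]
    _ = t * (t1 * (w * t) * w) * t1 := by group
    _ = t * (t1 * (t * w) * w) * t1 := by rw [h1.eq]
    _ = t * (t1 * t * (w * w)) * t1 := by group
    _ = t * t1 * t * t1 := by rw [hw]; group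

def sb : ↥(Wobbling ℤ) := ⟨sZ, sZ_mem⟩

def tb : ↥(Wobbling ℤ) := ⟨tZ, tZ_mem⟩

def t1b : ↥(Wobbling ℤ) := sb * tb * sb⁻¹

def cb : ↥(Wobbling ℤ) := tb * t1b * tb * t1b

lemma t1b_val : (t1b : Equiv.Perm ℤ) = t1Z := by
  rw [t1b]
  push_cast [Subgroup.coe_mul, InvMemClass.coe_inv]
  exact conj_t1

lemma cb_val : (cb : Equiv.Perm ℤ) = tZ * t1Z * tZ * t1Z := by
  rw [cb]
  push_cast [Subgroup.coe_mul]
  rw [t1b_val]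
  rfl

lemma cb_ne_one : cb ≠ 1 := by
  intro h
  have hval : (cb : Equiv.Perm ℤ) 0 = 0 := by rw [h]; rfl
  rw [cb_val] at hval
  unfold tZ t1Z at hval
  norm_num [Equiv.Perm.mul_apply, Equiv.swap_apply_def] at hval

section XSide

variable (m : ℕ → ℕ) (A B : ∀ n, Equiv.Perm (Fin (m n))) (hm : ∀ n, 1 ≤ m n)

lemma jump_bound (g : Equiv.Perm (XS m)) (r : ℝ)
    (hg : ∀ x, ((dd m A B x (g x) : ℕ) : ℝ) ≤ r) {x : XS m} (hx : (g x).1 ≠ x.1) :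
    ((x.1 : ℝ)) + 1 ≤ r ∧ (((g x).1 : ℝ)) + 1 ≤ r := by
  have heq : dd m A B x (g x) = cst m x.1 + cst m (g x).1 := by
    unfold dd; rw [if_neg (fun hc => hx hc.symm)]
  have h1 := hg x
  rw [heq] at h1
  constructor
  · refine le_trans ?_ h1
    have : x.1 + 1 ≤ cst m x.1 + cst m (g x).1 := by unfold cst; omega
    exact_mod_cast this
  · refine le_trans ?_ h1
    have : (g x).1 + 1 ≤ cst m x.1 + cst m (g x).1 := by unfold cst; omega
    exact_mod_cast this

lemma inv_high (g : Equiv.Perm (XS m)) (r : ℝ)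
    (hg : ∀ x, ((dd m A B x (g x) : ℕ) : ℝ) ≤ r) (N : ℕ) (hN : r < N)
    {n : ℕ} (hn : N ≤ n) (x : XS m) : x.1 = n ↔ (g x).1 = n := by
  have hNn : (N : ℝ) ≤ (n : ℝ) := by exact_mod_cast hn
  constructor
  · intro hx
    by_contra hc
    have hne : (g x).1 ≠ x.1 := by rw [hx]; exact hc
    have hj := (jump_bound m A B g r hg hne).1
    rw [hx] at hj
    linarith
  · intro hgx
    by_contra hc
    have hne : (g x).1 ≠ x.1 := by rw [hgx]; exact fun hcc => hc hcc.symm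
    have hj := (jump_bound m A B g r hg hne).2
    rw [hgx] at hj
    linarith

lemma inv_low (g : Equiv.Perm (XS m)) (r : ℝ)
    (hg : ∀ x, ((dd m A B x (g x) : ℕ) : ℝ) ≤ r) (N : ℕ) (hN : r < N)
    (hr0 : 0 ≤ r) (x : XS m) : x.1 < N ↔ (g x).1 < N := by
  constructor
  · intro hx
    by_contra hc
    push_neg at hc
    have hne : (g x).1 ≠ x.1 := by omega
    have hj := (jump_bound m A B g r hg hne).2
    have : (N : ℝ) ≤ ((g x).1 : ℝ) := by exact_mod_cast hc
    linarith
  · intro hgx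
    by_contra hc
    push_neg at hc
    have hne : (g x).1 ≠ x.1 := by omega
    have hj := (jump_bound m A B g r hg hne).1
    have : (N : ℝ) ≤ (x.1 : ℝ) := by exact_mod_cast hc
    linarith

lemma pow_fix (g : Equiv.Perm (XS m)) (F : Set (XS m)) (hfin : F.Finite)
    (hinv : ∀ y, y ∈ F ↔ g y ∈ F) : ∃ k : ℕ, 0 < k ∧ ∀ y ∈ F, (g ^ k) y = y := by
  classical
  haveI := hfin.fintype
  set σ := g.subtypePerm (fun y => (hinv y).symm) with hσ
  refine ⟨orderOf σ, orderOf_pos σ, ?_⟩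
  intro y hy
  have h1 : σ ^ orderOf σ = 1 := pow_orderOf_eq_one σ
  rw [hσ, Equiv.Perm.subtypePerm_pow] at h1
  have h2 := congrArg (fun (e : Equiv.Perm {x // x ∈ F}) => (e ⟨y, hy⟩ : {x // x ∈ F}).val) h1
  simpa using h2

end XSide

end NW

section NoWZ

open SP NW

lemma noWZ (m : ℕ → ℕ) (A B : ∀ n, Equiv.Perm (Fin (m n))) (hm : ∀ n, 1 ≤ m n) :
    ¬ ∃ ψ : ↥(Wobbling ℤ) →* ↥(@Wobbling (XS m) (metricX m A B hm)),
      Function.Injective ψ := by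
  letI := metricX m A B hm
  rintro ⟨ψ, hψ⟩
  obtain ⟨rS, hrS⟩ := (ψ sb).2
  obtain ⟨rT, hrT⟩ := (ψ tb).2
  set Sp : Equiv.Perm (XS m) := ((ψ sb : ↥(Wobbling (XS m))) : Equiv.Perm (XS m)) with hSp
  set Tp : Equiv.Perm (XS m) := ((ψ tb : ↥(Wobbling (XS m))) : Equiv.Perm (XS m)) with hTp
  have hr0S : 0 ≤ rS := le_trans dist_nonneg (hrS ⟨0, ⟨0, hm 0⟩⟩)
  have hr0T : 0 ≤ rT := le_trans dist_nonneg (hrT ⟨0, ⟨0, hm 0⟩⟩)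
  set N : ℕ := ⌊max rS rT⌋₊ + 1 with hN
  have hrSN : rS < N := by
    have h1 : rS ≤ max rS rT := le_max_left _ _
    have h2 : max rS rT < ((⌊max rS rT⌋₊ : ℝ) + 1) := Nat.lt_floor_add_one _
    rw [hN]; push_cast
    linarith
  have hrTN : rT < N := by
    have h1 : rT ≤ max rS rT := le_max_right _ _
    have h2 : max rS rT < ((⌊max rS rT⌋₊ : ℝ) + 1) := Nat.lt_floor_add_one _
    rw [hN]; push_cast
    linarith
  have hgS : ∀ x, ((dd m A B x (Sp x) : ℕ) : ℝ) ≤ rS := fun x => hrS x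
  have hgT : ∀ x, ((dd m A B x (Tp x) : ℕ) : ℝ) ≤ rT := fun x => hrT x
  -- pointwise fixing on an invariant finite set
  have hfixF : ∀ (F : Set (XS m)), F.Finite →
      (∀ y, y ∈ F ↔ Sp y ∈ F) → (∀ y, y ∈ F ↔ Tp y ∈ F) →
      ∀ x0 ∈ F, ((ψ cb : ↥(Wobbling (XS m))) : Equiv.Perm (XS m)) x0 = x0 := by
    intro F hFfin hSinv hTinv x0 hx0
    obtain ⟨k, hk, hfix⟩ := pow_fix m Sp F hFfin hSinv
    set M : ℕ := 3 * k with hM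
    have hM3 : 3 ≤ M := by omega
    have hM3' : (3 : ℤ) ≤ (M : ℤ) := by exact_mod_cast hM3
    set tMb : ↥(Wobbling ℤ) := sb ^ M * tb * (sb ^ M)⁻¹ with htMb
    set w : Equiv.Perm ℤ := Equiv.swap ((0 : ℤ) + M) (1 + M) with hwdef
    have hw : (tMb : Equiv.Perm ℤ) = w := by
      rw [htMb]
      push_cast [Subgroup.coe_mul, InvMemClass.coe_inv, SubgroupClass.coe_pow]
      exact conj_swap_M M
    have hcomm1 : Commute w tZ := by
      unfold tZ
      apply swap_commute <;> omega
    have hcomm2 : Commute w t1Z := by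
      unfold t1Z
      apply swap_commute <;> omega
    have hww : w * w = 1 := Equiv.swap_mul_self _ _
    have hcb2 : cb = tb * tMb * t1b * tb * tMb * t1b := by
      apply Subtype.ext
      push_cast [Subgroup.coe_mul]
      rw [cb_val, t1b_val, hw]
      exact (key_id tZ t1Z w hcomm1 hcomm2 hww).symm
    -- images
    set U1 : Equiv.Perm (XS m) := ((ψ t1b : ↥(Wobbling (XS m))) : Equiv.Perm (XS m)) with hU1def
    set UM : Equiv.Perm (XS m) := ((ψ tMb : ↥(Wobbling (XS m))) : Equiv.Perm (XS m)) with hUMdef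
    have hU1 : U1 = Sp * Tp * Sp⁻¹ := by
      rw [hU1def, t1b, map_mul, map_mul, map_inv]
      push_cast [Subgroup.coe_mul, InvMemClass.coe_inv]
      rfl
    have hUM : UM = Sp ^ M * Tp * (Sp ^ M)⁻¹ := by
      rw [hUMdef, htMb, map_mul, map_mul, map_inv, map_pow]
      push_cast [Subgroup.coe_mul, InvMemClass.coe_inv, SubgroupClass.coe_pow]
      rfl
    have hT2 : Tp * Tp = 1 := by
      have h1 : tb * tb = 1 := by
        apply Subtype.ext
        push_cast [Subgroup.coe_mul]
        exact Equiv.swap_mul_self _ _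
      have h2 := congrArg ψ h1
      rw [map_mul, map_one] at h2
      have := congrArg (fun (u : ↥(Wobbling (XS m))) => (u : Equiv.Perm (XS m))) h2
      push_cast [Subgroup.coe_mul] at this
      exact this
    have hT2p : ∀ z, Tp (Tp z) = z := by
      intro z
      have := congrArg (fun (e : Equiv.Perm (XS m)) => e z) hT2
      simpa [Equiv.Perm.mul_apply] using this
    have hU1sq : U1 * U1 = 1 := by
      have h1 : t1b * t1b = 1 := by
        apply Subtype.ext
        push_cast [Subgroup.coe_mul]
        rw [t1b_val]
        exact Equiv.swap_mul_self _ _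
      have h2 := congrArg ψ h1
      rw [map_mul, map_one] at h2
      have := congrArg (fun (u : ↥(Wobbling (XS m))) => (u : Equiv.Perm (XS m))) h2
      push_cast [Subgroup.coe_mul] at this
      exact this
    have hU1sqp : ∀ z, U1 (U1 z) = z := by
      intro z
      have := congrArg (fun (e : Equiv.Perm (XS m)) => e z) hU1sq
      simpa [Equiv.Perm.mul_apply] using this
    have hTF : ∀ y ∈ F, Tp y ∈ F := fun y hy => (hTinv y).mp hy
    have hSF : ∀ y ∈ F, Sp y ∈ F := fun y hy => (hSinv y).mp hy
    have hSinvF : ∀ y ∈ F, Sp⁻¹ y ∈ F := by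
      intro y hy
      have := (hSinv (Sp⁻¹ y)).mpr
      apply this
      simpa using hy
    have hU1F : ∀ y ∈ F, U1 y ∈ F := by
      intro y hy
      rw [hU1]
      simp only [Equiv.Perm.mul_apply]
      exact hSF _ (hTF _ (hSinvF _ hy))
    have hSMfix : ∀ y ∈ F, (Sp ^ M) y = y := by
      intro y hy
      have he : Sp ^ M = Sp ^ k * Sp ^ k * Sp ^ k := by
        rw [hM, show 3 * k = k + k + k by ring, pow_add, pow_add]
      rw [he]
      simp only [Equiv.Perm.mul_apply]
      rw [hfix y hy, hfix y hy, hfix y hy]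
    have hSMinvfix : ∀ y ∈ F, (Sp ^ M)⁻¹ y = y := by
      intro y hy
      have := congrArg (fun z => (Sp ^ M)⁻¹ z) (hSMfix y hy)
      simpa using this.symm
    have hUMF : ∀ y ∈ F, UM y = Tp y := by
      intro y hy
      rw [hUM]
      simp only [Equiv.Perm.mul_apply]
      rw [hSMinvfix y hy, hSMfix _ (hTF y hy)]
    -- final evaluation
    have himg : (ψ cb : ↥(Wobbling (XS m))) = ψ tb * ψ tMb * ψ t1b * ψ tb * ψ tMb * ψ t1b := by
      rw [hcb2]
      simp [map_mul]
    have hvalimg : ((ψ cb : ↥(Wobbling (XS m))) : Equiv.Perm (XS m)) =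
        Tp * UM * U1 * Tp * UM * U1 := by
      rw [himg]
      push_cast [Subgroup.coe_mul]
      rfl
    rw [hvalimg]
    simp only [Equiv.Perm.mul_apply]
    rw [hUMF _ (hU1F x0 hx0), hT2p (U1 x0), hU1sqp x0, hUMF x0 hx0, hT2p x0]
  -- conclude : ψ cb = 1
  have hmain : ψ cb = 1 := by
    apply Subtype.ext
    apply Equiv.ext
    intro x0
    by_cases hx0 : x0.1 < N
    · have hFfin : {y : XS m | y.1 < N}.Finite := by
        refine ((lowF m N).finite_toSet).subset ?_
        intro y hy
        simpa [mem_lowF] using hy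
      exact hfixF {y : XS m | y.1 < N} hFfin
        (fun y => inv_low m A B Sp rS hgS N hrSN hr0S y)
        (fun y => inv_low m A B Tp rT hgT N hrTN hr0T y)
        x0 hx0
    · push_neg at hx0
      have hFfin : {y : XS m | y.1 = x0.1}.Finite := by
        refine ((lowF m (x0.1 + 1)).finite_toSet).subset ?_
        intro y hy
        simp only [Set.mem_setOf_eq] at hy
        simp [mem_lowF, hy]
      exact hfixF {y : XS m | y.1 = x0.1} hFfin
        (fun y => inv_high m A B Sp rS hgS N hrSN hx0 y)
        (fun y => inv_high m A B Tp rT hgT N hrTN hx0 y)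
        x0 rfl
  exact cb_ne_one (hψ (by rw [hmain, map_one]))

end NoWZ

section Embed

open SP

lemma embedF2 (m : ℕ → ℕ) (hm : ∀ n, 1 ≤ m n)
    (ρ : ∀ n, FreeGroup (Fin 2) →* Equiv.Perm (Fin (m n)))
    (hsep : ∀ g : FreeGroup (Fin 2), g ≠ 1 → ∃ n, ρ n g ≠ 1) :
    ∃ φ : FreeGroup (Fin 2) →* ↥(@Wobbling (XS m)
      (metricX m (fun n => ρ n (FreeGroup.of 0)) (fun n => ρ n (FreeGroup.of 1)) hm)),
      Function.Injective φ := by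
  letI := metricX m (fun n => ρ n (FreeGroup.of 0)) (fun n => ρ n (FreeGroup.of 1)) hm
  set Φ : FreeGroup (Fin 2) →* Equiv.Perm (XS m) := MonoidHom.mk'
    (fun g => Equiv.Perm.sigmaCongrRightHom _ (fun n => ρ n g))
    (by
      intro a b
      have he : (fun n => ρ n (a * b)) = (fun n => ρ n a) * (fun n => ρ n b) := by
        funext n
        exact map_mul _ _ _
      show (Equiv.Perm.sigmaCongrRightHom (fun n => Fin (m n))) (fun n => ρ n (a * b)) =
        (Equiv.Perm.sigmaCongrRightHom (fun n => Fin (m n))) (fun n => ρ n a) *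
          (Equiv.Perm.sigmaCongrRightHom (fun n => Fin (m n))) (fun n => ρ n b)
      rw [he]
      exact map_mul (Equiv.Perm.sigmaCongrRightHom _) _ _) with hΦ
  have hmem : ∀ g, Φ g ∈ Wobbling (XS m) := by
    intro g
    have hle : Subgroup.closure (Set.range (FreeGroup.of : Fin 2 → FreeGroup (Fin 2))) ≤
        Subgroup.comap Φ (Wobbling (XS m)) := by
      rw [Subgroup.closure_le]
      rintro _ ⟨i, rfl⟩
      rw [SetLike.mem_coe, Subgroup.mem_comap]
      by_cases hi : i = 0
      · subst hi
        refine ⟨1, fun x => ?_⟩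
        show ((dd m (fun n => ρ n (FreeGroup.of 0)) (fun n => ρ n (FreeGroup.of 1)) x
            (alphaX m (fun n => ρ n (FreeGroup.of 0)) x) : ℕ) : ℝ) ≤ 1
        have := dd_alpha (A := fun n => ρ n (FreeGroup.of 0))
          (B := fun n => ρ n (FreeGroup.of 1)) x
        exact_mod_cast this
      · have hv : i.val ≠ 0 := fun h => hi (Fin.ext h)
        have hv2 : i.val < 2 := i.isLt
        have hi1 : i = 1 := Fin.ext (by omega)
        subst hi1
        refine ⟨1, fun x => ?_⟩
        show ((dd m (fun n => ρ n (FreeGroup.of 0)) (fun n => ρ n (FreeGroup.of 1)) x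
            (alphaX m (fun n => ρ n (FreeGroup.of 1)) x) : ℕ) : ℝ) ≤ 1
        have := dd_beta (A := fun n => ρ n (FreeGroup.of 0))
          (B := fun n => ρ n (FreeGroup.of 1)) x
        exact_mod_cast this
    have hg : g ∈ Subgroup.comap Φ (Wobbling (XS m)) := by
      apply hle
      rw [FreeGroup.closure_range_of]
      exact Subgroup.mem_top g
    exact hg
  refine ⟨Φ.codRestrict (Wobbling (XS m)) hmem, ?_⟩
  rw [injective_iff_map_eq_one]
  intro g hg
  have hval : Φ g = 1 := by
    have := congrArg Subtype.val hg
    exact this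
  by_contra hne
  obtain ⟨n, hn⟩ := hsep g hne
  apply hn
  apply Equiv.ext
  intro v
  have h2 : (⟨n, (ρ n g) v⟩ : XS m) = ⟨n, v⟩ := by
    rw [show (⟨n, (ρ n g) v⟩ : XS m) = Φ g ⟨n, v⟩ from rfl, hval]
    rfl
  rcases Sigma.mk.inj_iff.mp h2 with ⟨-, hh⟩
  exact eq_of_heq hh

end Embed

theorem stmt_19' : ∃ (X : Type) (inst : MetricSpace X), @Example2Spec X inst := by
  classical
  haveI : Countable (FreeGroup (Fin 2)) := FreeGroup.toWord_injective.countable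
  obtain ⟨e, he⟩ := exists_surjective_nat (FreeGroup (Fin 2))
  have hchoice : ∀ n : ℕ, ∃ (k : ℕ) (ρ : FreeGroup (Fin 2) →* Equiv.Perm (Fin k)),
      1 ≤ k ∧ (e n ≠ 1 → ρ (e n) ≠ 1) := by
    intro n
    by_cases h : e n = 1
    · exact ⟨1, 1, le_rfl, fun hc => absurd h hc⟩
    · obtain ⟨k, ρ, hk, hρ⟩ := freeGroup_rf (e n) h
      exact ⟨k, ρ, hk, fun _ => hρ⟩
  choose mf ρf hm hρ using hchoice
  set A : ∀ n, Equiv.Perm (Fin (mf n)) := fun n => ρf n (FreeGroup.of 0) with hA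
  set B : ∀ n, Equiv.Perm (Fin (mf n)) := fun n => ρf n (FreeGroup.of 1) with hB
  refine ⟨SP.XS mf, SP.metricX mf A B hm, ?_, ?_, ?_, ?_, ?_⟩
  · -- uniformly discrete
    refine ⟨1, one_pos, fun x y hxy => ?_⟩
    show (1 : ℝ) ≤ ((SP.dd mf A B x y : ℕ) : ℝ)
    have h1 := SP.one_le_dd (A := A) (B := B) hm hxy
    exact_mod_cast h1
  · -- bounded geometry
    intro r
    refine ⟨7 ^ ⌊r⌋₊ + ∑ n ∈ Finset.range ⌊r⌋₊, mf n, fun x => ?_⟩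
    show {y : SP.XS mf | ((SP.dd mf A B x y : ℕ) : ℝ) ≤ r}.ncard ≤ _
    exact SP.bounded_geometry (A := A) (B := B) hm r x
  · -- F₂ embeds
    have hsep : ∀ g : FreeGroup (Fin 2), g ≠ 1 → ∃ n, ρf n g ≠ 1 := by
      intro g hg
      obtain ⟨n, hn⟩ := he g
      refine ⟨n, ?_⟩
      rw [← hn] at hg ⊢
      exact hρ n hg
    exact embedF2 mf hm ρf hsep
  · -- no W(ℤ) embedding
    exact noWZ mf A B hm
  · -- no bornologous injection
    exact noBorn mf A B hm

/-- There exists a uniformly discrete metric space of uniformly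
bounded geometry such that `F₂` embeds into `W(X)`, while `W(ℤ)` does not embed into
`W(X)` (indeed there is no bornologous injection of `ℤ` into `X`). -/
theorem stmt_19 : ∃ (X : Type) (inst : MetricSpace X), @Example2Spec X inst := stmt_19'
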